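/- For any two positive integers m and n, ∑_{k_1+k_2+⋯+k_m=n} (n choose k_1,k_2,…,k_m) ∏_{i=1}^m (k_i m + 1)^{k_i - 1} = (n+1)^{n-1} m^n, where the sum ranges over all m-tuples (k_1,…,k_m) of nonnegative integers summing to n, (n choose k_1,…,k_m) = n!/(k_1!⋯k_m!) is the multinomial coefficient, and each factor (k_i m + 1)^{k_i - 1} with k_i = 0 is interpreted as 1. -/

import Mathlib

open Finset

lemma abel_fd_zero : ∀ (N d : ℕ), d < N → ∀ x : ℚ,
    (fwdDiff 1)^[N] (fun t : ℚ => (x + t) ^ d) = 0 := by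
  intro N
  induction N with
  | zero => intro d hd; omega
  | succ N ih =>
    intro d hd x
    rw [Function.iterate_succ_apply]
    have h1 : fwdDiff 1 (fun t : ℚ => (x + t) ^ d)
        = fun t : ℚ => ∑ i ∈ range d, (d.choose i : ℚ) * (x + t) ^ i := by
      funext t
      simp only [fwdDiff]
      have hb : (x + (t + 1)) ^ d = ∑ i ∈ range (d + 1), (x + t) ^ i * (d.choose i : ℚ) := by
        have := add_pow (x + t) 1 d
        simpa [add_assoc, add_comm, add_left_comm] using this
      rw [hb, sum_range_succ]
      simp [mul_comm]
    rw [h1]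
    have h2 : (fun t : ℚ => ∑ i ∈ range d, (d.choose i : ℚ) * (x + t) ^ i)
        = ∑ i ∈ range d, (d.choose i : ℚ) • (fun t : ℚ => (x + t) ^ i) := by
      funext t; simp
    rw [h2, fwdDiff_iter_finset_sum]
    refine Finset.sum_eq_zero fun i hi => ?_
    rw [mem_range] at hi
    rw [fwdDiff_iter_const_smul, ih i (by omega) x]
    simp

lemma abel_vanish (N d : ℕ) (hd : d < N) (x : ℚ) :
    ∑ j ∈ range (N + 1), (-1 : ℚ) ^ (N - j) * (N.choose j : ℚ) * (x + j) ^ d = 0 := by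
  have h := fwdDiff_iter_eq_sum_shift (M := ℚ) (G := ℚ) (h := 1)
    (fun t : ℚ => (x + t) ^ d) N 0
  rw [abel_fd_zero N d hd x] at h
  simp only [Pi.zero_apply, zero_add, nsmul_eq_mul, mul_one, zsmul_eq_mul] at h
  rw [eq_comm, h]
  refine Finset.sum_congr rfl fun j _ => ?_
  push_cast
  ring

noncomputable section
open Polynomial

/-- the Abel factor, with the `k = 0` case interpreted as `1`. -/
def abelF (x : ℚ) (k : ℕ) : ℚ := if k = 0 then 1 else x * (x + k) ^ (k - 1)

@[simp] lemma abelF_zero (x : ℚ) : abelF x 0 = 1 := rfl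

lemma abelF_succ (x : ℚ) (k : ℕ) : abelF x (k+1) = x * (x + (k+1)) ^ k := by
  simp [abelF]

lemma abelF_mul_pow (x : ℚ) (j n : ℕ) (hj : j ≤ n + 1) :
    abelF x j * (x + j) ^ (n + 1 - j) = x * (x + j) ^ n := by
  rcases j with _ | j
  · simp [abelF, pow_succ']
  · rw [abelF_succ]
    push_cast
    rw [mul_assoc, ← pow_add]
    congr 2
    omega

def abelL (n : ℕ) (x : ℚ) : ℚ[X] :=
  ∑ j ∈ Finset.range (n + 1),
    C ((n.choose j : ℚ) * abelF x j) * (X + C (((n - j : ℕ) : ℚ))) ^ (n - j)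

theorem abel_poly : ∀ n : ℕ, ∀ x : ℚ, abelL n x = (X + C (x + n)) ^ n := by
  intro n
  induction n with
  | zero => intro x; simp [abelL]
  | succ n ih =>
    intro x
    -- derivative computation
    have hchoose : ∀ j ≤ n, ((n+1).choose j : ℚ) * ((n + 1 - j : ℕ) : ℚ)
        = ((n : ℚ) + 1) * (n.choose j : ℚ) := by
      intro j hj
      have : (n+1).choose j * (n + 1 - j) = (n + 1) * n.choose j := by
        rw [← Nat.choose_succ_right_eq, ← Nat.add_one_mul_choose_eq]
      exact_mod_cast congrArg (fun t : ℕ => (t : ℚ)) this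
    have hder : derivative (abelL (n+1) x) = C ((n : ℚ) + 1) * (X + C (x + (n+1 : ℕ))) ^ n := by
      rw [abelL, derivative_sum]
      rw [Finset.sum_range_succ]
      have hlast : derivative (C (((n+1).choose (n+1) : ℚ) * abelF x (n+1)) *
          (X + C (((n + 1 - (n+1) : ℕ) : ℚ))) ^ (n + 1 - (n+1))) = 0 := by
        simp
      rw [hlast, add_zero]
      have hterm : ∀ j ∈ Finset.range (n+1),
          derivative (C (((n+1).choose j : ℚ) * abelF x j) *
            (X + C (((n + 1 - j : ℕ) : ℚ))) ^ (n + 1 - j))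
          = C (((n:ℚ)+1) * ((n.choose j : ℚ) * abelF x j)) *
            (X + C (((n + 1 - j : ℕ) : ℚ))) ^ (n - j) := by
        intro j hj
        rw [Finset.mem_range] at hj
        rw [derivative_C_mul, derivative_pow]
        rw [derivative_add, derivative_X, derivative_C, add_zero, mul_one]
        have h1 : (n + 1 - j) - 1 = n - j := by omega
        rw [h1, ← mul_assoc, ← C_mul]
        congr 2
        rw [mul_right_comm, hchoose j (by omega)]
        ring
      rw [Finset.sum_congr rfl hterm]
      have hIH := ih x
      have hcomp : ((abelL n x).comp (X + 1) : ℚ[X]) = (X + C (x + (n+1:ℕ))) ^ n := by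
        rw [hIH]
        rw [pow_comp, add_comp, X_comp, C_comp]
        congr 1
        push_cast
        simp only [C_add, C_1]
        ring
      rw [← hcomp, abelL, Polynomial.sum_comp]
      rw [Finset.mul_sum]
      refine Finset.sum_congr rfl fun j hj => ?_
      rw [Finset.mem_range] at hj
      rw [mul_comp, C_comp, pow_comp, add_comp, X_comp, C_comp]
      have h4 : ((n + 1 - j : ℕ) : ℚ) = ((n - j : ℕ) : ℚ) + 1 := by
        have : n + 1 - j = (n - j) + 1 := by omega
        rw [this]; push_cast; ring
      rw [h4, map_add, map_one, C_mul, mul_assoc]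
      ring
    -- RHS derivative
    have hR : derivative ((X + C (x + ((n+1 : ℕ) : ℚ))) ^ (n+1))
        = C ((n : ℚ) + 1) * (X + C (x + ((n+1 : ℕ) : ℚ))) ^ n := by
      rw [derivative_pow, derivative_add, derivative_X, derivative_C, add_zero, mul_one]
      norm_num
    have hdiff : derivative (abelL (n+1) x - (X + C (x + ((n+1 : ℕ) : ℚ))) ^ (n+1)) = 0 := by
      rw [derivative_sub, hder, hR, sub_self]
    have hC := eq_C_of_derivative_eq_zero hdiff
    set y₀ : ℚ := -x - (n+1) with hy₀
    have hevalL : eval y₀ (abelL (n+1) x) = 0 := by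
      rw [abelL, eval_finset_sum]
      have hterm2 : ∀ j ∈ Finset.range (n+2),
          eval y₀ (C (((n+1).choose j : ℚ) * abelF x j) * (X + C (((n+1-j : ℕ) : ℚ))) ^ (n+1-j))
          = ((-1 : ℚ) ^ (n+1-j) * ((n+1).choose j : ℚ) * (x + j) ^ n) * x := by
        intro j hj
        rw [Finset.mem_range] at hj
        rw [eval_mul, eval_C, eval_pow, eval_add, eval_X, eval_C]
        have hb : y₀ + ((n+1-j : ℕ) : ℚ) = -(x + j) := by
          rw [hy₀, Nat.cast_sub (by omega : j ≤ n+1)]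
          push_cast
          ring
        rw [hb, neg_pow]
        have := abelF_mul_pow x j n (by omega)
        calc ((n+1).choose j : ℚ) * abelF x j * ((-1) ^ (n+1-j) * (x + j) ^ (n+1-j))
            = ((-1 : ℚ) ^ (n+1-j) * ((n+1).choose j : ℚ)) *
              (abelF x j * (x + j) ^ (n+1-j)) := by ring
          _ = ((-1 : ℚ) ^ (n+1-j) * ((n+1).choose j : ℚ) * (x + j) ^ n) * x := by
              rw [this]; ring
      rw [Finset.sum_congr rfl hterm2, ← Finset.sum_mul]
      have hv := abel_vanish (n+1) n (by omega) x
      have : ∑ j ∈ Finset.range (n+2),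
          (-1 : ℚ) ^ (n+1-j) * ((n+1).choose j : ℚ) * (x + j) ^ n = 0 := hv
      rw [this, zero_mul]
    have hevalR : eval y₀ ((X + C (x + ((n+1 : ℕ) : ℚ))) ^ (n+1)) = 0 := by
      rw [eval_pow, eval_add, eval_X, eval_C, hy₀]
      push_cast
      ring_nf
    have hc0 : (abelL (n+1) x - (X + C (x + ((n+1 : ℕ) : ℚ))) ^ (n+1)).coeff 0 = 0 := by
      have := congrArg (eval y₀) hC
      rw [eval_sub, hevalL, hevalR, eval_C] at this
      simpa using this.symm
    have := hC
    rw [hc0, map_zero, sub_eq_zero] at this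
    exact this

theorem abel_A (n : ℕ) (x y : ℚ) :
    ∑ j ∈ Finset.range (n+1), (n.choose j : ℚ) * abelF x j * (y + ((n-j : ℕ) : ℚ)) ^ (n-j)
      = (x + y + n) ^ n := by
  have h := congrArg (eval y) (abel_poly n x)
  rw [abelL, eval_finset_sum, eval_pow, eval_add, eval_X, eval_C] at h
  rw [show (x + y + (n : ℚ)) = y + (x + (n : ℚ)) by ring, ← h]
  refine Finset.sum_congr rfl fun j hj => ?_
  rw [eval_mul, eval_C, eval_pow, eval_add, eval_X, eval_C]

lemma abel_key (y : ℚ) (k : ℕ) :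
    (y + (k : ℚ)) ^ k = abelF y k + (k : ℚ) * (y + (k : ℚ)) ^ (k - 1) := by
  rcases k with _ | c
  · simp
  · rw [abelF_succ]
    have : (y + ((c+1 : ℕ) : ℚ)) ^ (c+1) = (y + ((c+1 : ℕ) : ℚ)) * (y + ((c+1 : ℕ) : ℚ)) ^ c := by
      rw [← pow_succ']
    rw [this]
    push_cast
    ring_nf

theorem abel_B (n : ℕ) (x y : ℚ) :
    ∑ j ∈ Finset.range (n+1), (n.choose j : ℚ) * abelF x j * abelF y (n-j)
      = abelF (x+y) n := by
  rcases n with _ | n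
  · simp
  have hA := abel_A (n+1) x y
  have hsplit : ∀ j ∈ Finset.range (n+2),
      ((n+1).choose j : ℚ) * abelF x j * (y + ((n+1-j : ℕ) : ℚ)) ^ (n+1-j)
      = ((n+1).choose j : ℚ) * abelF x j * abelF y (n+1-j)
        + ((n+1).choose j : ℚ) * abelF x j * (((n+1-j : ℕ) : ℚ)
            * (y + ((n+1-j : ℕ) : ℚ)) ^ (n+1-j-1)) := by
    intro j hj
    rw [abel_key y (n+1-j)]
    ring
  rw [Finset.sum_congr rfl hsplit, Finset.sum_add_distrib] at hA
  -- compute the second sum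
  have hS2 : ∑ j ∈ Finset.range (n+2), ((n+1).choose j : ℚ) * abelF x j *
      (((n+1-j : ℕ) : ℚ) * (y + ((n+1-j : ℕ) : ℚ)) ^ (n+1-j-1))
      = ((n : ℚ) + 1) * (x + y + (n+1)) ^ n := by
    rw [Finset.sum_range_succ]
    have hlast : ((n+1).choose (n+1) : ℚ) * abelF x (n+1) *
        (((n+1-(n+1) : ℕ) : ℚ) * (y + ((n+1-(n+1) : ℕ) : ℚ)) ^ (n+1-(n+1)-1)) = 0 := by
      simp
    rw [hlast, add_zero]
    have hterm : ∀ j ∈ Finset.range (n+1),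
        ((n+1).choose j : ℚ) * abelF x j *
          (((n+1-j : ℕ) : ℚ) * (y + ((n+1-j : ℕ) : ℚ)) ^ (n+1-j-1))
        = ((n : ℚ) + 1) * ((n.choose j : ℚ) * abelF x j *
            ((y+1) + ((n-j : ℕ) : ℚ)) ^ (n-j)) := by
      intro j hj
      rw [Finset.mem_range] at hj
      have hc : ((n+1).choose j : ℚ) * ((n+1-j : ℕ) : ℚ) = ((n : ℚ) + 1) * (n.choose j : ℚ) := by
        have : (n+1).choose j * (n+1-j) = (n+1) * n.choose j := by
          rw [← Nat.choose_succ_right_eq, ← Nat.add_one_mul_choose_eq]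
        exact_mod_cast congrArg (fun t : ℕ => (t : ℚ)) this
      have he : n+1-j-1 = n-j := by omega
      have hb : (y + ((n+1-j : ℕ) : ℚ)) = ((y+1) + ((n-j : ℕ) : ℚ)) := by
        rw [Nat.cast_sub (by omega : j ≤ n + 1), Nat.cast_sub (by omega : j ≤ n)]
        push_cast
        ring
      rw [he, hb, ← mul_assoc]
      rw [show ((n+1).choose j : ℚ) * abelF x j * ((n+1-j : ℕ) : ℚ)
          = ((n+1).choose j : ℚ) * ((n+1-j : ℕ) : ℚ) * abelF x j by ring, hc]
      ring
    rw [Finset.sum_congr rfl hterm, ← Finset.mul_sum, abel_A n x (y+1)]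
    have : x + (y+1) + (n : ℚ) = x + y + ((n : ℚ) + 1) := by ring
    rw [this]
  rw [hS2] at hA
  have : ∑ j ∈ Finset.range (n+2), ((n+1).choose j : ℚ) * abelF x j * abelF y (n+1-j)
      = (x + y + ((n+1 : ℕ) : ℚ)) ^ (n+1) - ((n : ℚ) + 1) * (x + y + (n+1)) ^ n := by
    rw [← hA]; push_cast; ring
  rw [this, abelF_succ]
  push_cast
  ring

lemma multinomial_map {α β : Type*} (s : Finset α) (e : α ↪ β) (f : β → ℕ) :
    Nat.multinomial (s.map e) f = Nat.multinomial s (f ∘ e) := by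
  rw [Nat.multinomial, Nat.multinomial, Finset.sum_map, Finset.prod_map]
  rfl

lemma multinomial_cons_fin (r a : ℕ) (t : Fin r → ℕ) :
    Nat.multinomial (Finset.univ : Finset (Fin (r+1))) (Fin.cons a t)
      = (a + ∑ i, t i).choose a * Nat.multinomial Finset.univ t := by
  rw [Fin.univ_succ, Nat.multinomial_cons (by simp) _]
  congr 1
  · congr 1
    · rw [Finset.sum_map]
      simp
  · rw [multinomial_map]
    congr 1

lemma adT_succ_eq (r s : ℕ) :
    Finset.Nat.antidiagonalTuple (r+1) s
      = (Finset.HasAntidiagonal.antidiagonal s).biUnion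
        (fun p => (Finset.Nat.antidiagonalTuple r p.2).map
          ⟨Fin.cons p.1, Fin.cons_right_injective (α := fun _ => ℕ) p.1⟩) := by
  ext x
  rw [Finset.Nat.mem_antidiagonalTuple, Finset.mem_biUnion]
  constructor
  · intro hx
    refine ⟨(x 0, ∑ i : Fin r, x (Fin.succ i)), ?_, ?_⟩
    · rw [Finset.HasAntidiagonal.mem_antidiagonal, ← hx, Fin.sum_univ_succ]
    · rw [Finset.mem_map]
      exact ⟨Fin.tail x, Finset.Nat.mem_antidiagonalTuple.mpr rfl, Fin.cons_self_tail x⟩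
  · rintro ⟨p, hp, hx⟩
    rw [Finset.mem_map] at hx
    obtain ⟨t, ht, rfl⟩ := hx
    rw [Finset.HasAntidiagonal.mem_antidiagonal] at hp
    rw [Finset.Nat.mem_antidiagonalTuple] at ht
    simp only [Function.Embedding.coeFn_mk, Fin.sum_univ_succ, Fin.cons_zero, Fin.cons_succ]
    rw [ht, hp]

lemma adT_sum_succ {M : Type*} [AddCommMonoid M] (r s : ℕ) (F : (Fin (r+1) → ℕ) → M) :
    ∑ k ∈ Finset.Nat.antidiagonalTuple (r+1) s, F k
      = ∑ p ∈ Finset.HasAntidiagonal.antidiagonal s, ∑ t ∈ Finset.Nat.antidiagonalTuple r p.2,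
          F (Fin.cons p.1 t) := by
  rw [adT_succ_eq, Finset.sum_biUnion]
  · refine Finset.sum_congr rfl fun p hp => ?_
    rw [Finset.sum_map]
    rfl
  · intro p hp q hq hpq
    simp only [Finset.disjoint_left]
    intro z hz hz'
    rw [Finset.mem_map] at hz hz'
    obtain ⟨t, ht, rfl⟩ := hz
    obtain ⟨t', ht', h⟩ := hz'
    apply hpq
    have h0 : p.1 = q.1 := by
      have := congrFun h 0
      simpa using this.symm
    rw [Finset.mem_coe, Finset.HasAntidiagonal.mem_antidiagonal] at hp hq
    have : p.2 = q.2 := by omega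
    exact Prod.ext h0.symm this.symm ▸ rfl

theorem hurwitz : ∀ (r : ℕ) (x : ℚ) (s : ℕ),
    ∑ k ∈ Finset.Nat.antidiagonalTuple r s,
      (Nat.multinomial Finset.univ k : ℚ) * ∏ i, abelF x (k i)
      = abelF ((r : ℚ) * x) s := by
  intro r
  induction r with
  | zero =>
    intro x s
    rcases s with _ | s
    · simp [abelF]
    · simp [abelF]
  | succ r ih =>
    intro x s
    rw [adT_sum_succ]
    have hinner : ∀ p ∈ Finset.HasAntidiagonal.antidiagonal s,
        ∑ t ∈ Finset.Nat.antidiagonalTuple r p.2,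
          (Nat.multinomial Finset.univ (Fin.cons p.1 t) : ℚ) *
            ∏ i, abelF x ((Fin.cons p.1 t : Fin (r+1) → ℕ) i)
        = (s.choose p.1 : ℚ) * abelF x p.1 * abelF ((r : ℚ) * x) p.2 := by
      intro p hp
      rw [Finset.HasAntidiagonal.mem_antidiagonal] at hp
      have : ∀ t ∈ Finset.Nat.antidiagonalTuple r p.2,
          (Nat.multinomial Finset.univ (Fin.cons p.1 t) : ℚ) *
            ∏ i, abelF x ((Fin.cons p.1 t : Fin (r+1) → ℕ) i)
          = (s.choose p.1 : ℚ) * abelF x p.1 *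
              ((Nat.multinomial Finset.univ t : ℚ) * ∏ i, abelF x (t i)) := by
        intro t ht
        rw [Finset.Nat.mem_antidiagonalTuple] at ht
        rw [multinomial_cons_fin, ht, hp, Fin.prod_univ_succ]
        simp only [Fin.cons_zero, Fin.cons_succ]
        push_cast
        ring
      rw [Finset.sum_congr rfl this, ← Finset.mul_sum, ih x p.2]
    rw [Finset.sum_congr rfl hinner, Finset.Nat.sum_antidiagonal_eq_sum_range_succ_mk]
    have hB := abel_B s x ((r : ℚ) * x)
    have hcast : (((r+1 : ℕ) : ℚ)) * x = x + (r : ℚ) * x := by push_cast; ring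
    rw [hcast, ← hB]

lemma factor_cast (m : ℕ) (hm : 0 < m) (c : ℕ) :
    ((c : ℚ) * m + 1) ^ (c - 1) = (m : ℚ) ^ c * abelF ((m : ℚ))⁻¹ c := by
  have hm' : (m : ℚ) ≠ 0 := Nat.cast_ne_zero.mpr hm.ne'
  rcases c with _ | d
  · simp
  · rw [abelF_succ]
    push_cast
    have h1 : ((m : ℚ))⁻¹ + ((d : ℚ) + 1) = (((d : ℚ) + 1) * m + 1) / m := by
      field_simp
      ring
    rw [h1, div_pow]
    rw [eq_comm, mul_comm ((m:ℚ))⁻¹, mul_comm ((m:ℚ)^(d+1)), mul_assoc, pow_succ]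
    rw [show ((m:ℚ))⁻¹ * ((m:ℚ) ^ d * (m:ℚ)) = (m:ℚ) ^ d by
      rw [mul_comm ((m:ℚ)^d), ← mul_assoc, inv_mul_cancel₀ hm', one_mul]]
    rw [div_mul_cancel₀ _ (pow_ne_zero _ hm')]

theorem multinomial_forest_identity (m n : ℕ) (hm : 0 < m) (hn : 0 < n) :
    ∑ k ∈ Finset.Nat.antidiagonalTuple m n,
      Nat.multinomial Finset.univ k * ∏ i, (k i * m + 1) ^ (k i - 1)
      = (n + 1) ^ (n - 1) * m ^ n := by
  have hm' : (m : ℚ) ≠ 0 := Nat.cast_ne_zero.mpr hm.ne'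
  obtain ⟨n', rfl⟩ : ∃ n', n = n' + 1 := ⟨n - 1, by omega⟩
  rw [← Nat.cast_inj (R := ℚ)]
  push_cast
  have key := hurwitz m ((m : ℚ))⁻¹ (n'+1)
  rw [mul_inv_cancel₀ hm'] at key
  have habel1 : abelF 1 (n'+1) = ((n' : ℚ) + 1 + 1) ^ n' := by
    rw [abelF_succ]
    push_cast
    ring
  have hprod : ∀ k ∈ Finset.Nat.antidiagonalTuple m (n'+1),
      ∏ i, ((k i : ℚ) * m + 1) ^ (k i - 1)
      = (m : ℚ) ^ (n'+1) * ∏ i, abelF ((m : ℚ))⁻¹ (k i) := by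
    intro k hk
    rw [Finset.Nat.mem_antidiagonalTuple] at hk
    calc ∏ i, ((k i : ℚ) * m + 1) ^ (k i - 1)
        = ∏ i, ((m : ℚ) ^ (k i) * abelF ((m : ℚ))⁻¹ (k i)) :=
          Finset.prod_congr rfl fun i _ => factor_cast m hm (k i)
      _ = (∏ i, (m : ℚ) ^ (k i)) * ∏ i, abelF ((m : ℚ))⁻¹ (k i) := Finset.prod_mul_distrib
      _ = (m : ℚ) ^ (n'+1) * ∏ i, abelF ((m : ℚ))⁻¹ (k i) := by
          rw [Finset.prod_pow_eq_pow_sum, hk]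
  have : ∀ k ∈ Finset.Nat.antidiagonalTuple m (n'+1),
      (Nat.multinomial Finset.univ k : ℚ) * ∏ i, ((k i : ℚ) * m + 1) ^ (k i - 1)
      = (m : ℚ) ^ (n'+1) * ((Nat.multinomial Finset.univ k : ℚ) *
          ∏ i, abelF ((m : ℚ))⁻¹ (k i)) := by
    intro k hk
    rw [hprod k hk]
    ring
  rw [Finset.sum_congr rfl this, ← Finset.mul_sum, key, habel1]
  push_cast
  ring
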